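/- For every 0 ≤ r < p, every z ∈ ℂ with |z| = 1 and Δ(z) ∈ (−2, 2), and either root Γ of Γ² − Δ(z)·Γ + 1 = 0, at least one of j_{r,Γ}(z) and ĵ_{r,Γ}(z) is nonzero. (Proposition 3.4(ii): at no point of the bands do both boundary-value Jost functions vanish.) -/

import Mathlib

open Polynomial Matrix

/-- `ρ_n = (1 - |α_n|²)^{1/2}`. -/
noncomputable def szRho (α : ℕ → ℂ) (n : ℕ) : ℝ := Real.sqrt (1 - ‖α n‖ ^ 2)

/-- The one-step Szegő transfer matrix `A_k(z)`. -/
noncomputable def SzegoA (α : ℕ → ℂ) (k : ℕ) (z : ℂ) : Matrix (Fin 2) (Fin 2) ℂ :=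
  ((szRho α k : ℂ))⁻¹ • !![z, -(starRingEnd ℂ (α k)); -z * α k, 1]

/-- The transfer matrix `T_n(z) = A_{n-1}(z) ⋯ A_0(z)`. -/
noncomputable def SzegoT (α : ℕ → ℂ) : ℕ → ℂ → Matrix (Fin 2) (Fin 2) ℂ
  | 0, _ => 1
  | n + 1, z => SzegoA α n z * SzegoT α n z

/-- The discriminant `Δ(z) = z^{-p/2} tr T_p(z)` (for `p` even, `z ≠ 0`). -/
noncomputable def SzegoDisc (α : ℕ → ℂ) (p : ℕ) (z : ℂ) : ℂ :=
  (z ^ (p / 2))⁻¹ * (SzegoT α p z).trace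

/-- The matrix `P_Γ(z) = (z^{-p/2} T_p(z) - Γ⁻¹ 1)/(Γ - Γ⁻¹)`. -/
noncomputable def SzegoPGamma (α : ℕ → ℂ) (p : ℕ) (Γ : ℂ) (z : ℂ) :
    Matrix (Fin 2) (Fin 2) ℂ :=
  (Γ - Γ⁻¹)⁻¹ • ((z ^ (p / 2))⁻¹ • SzegoT α p z - Γ⁻¹ • (1 : Matrix (Fin 2) (Fin 2) ℂ))

/-- `a_Γ(z) = ½ (sum of the four entries of P_Γ(z))`. -/
noncomputable def szAΓ (α : ℕ → ℂ) (p : ℕ) (Γ : ℂ) (z : ℂ) : ℂ :=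
  (1 / 2) * (SzegoPGamma α p Γ z 0 0 + SzegoPGamma α p Γ z 0 1 +
    SzegoPGamma α p Γ z 1 0 + SzegoPGamma α p Γ z 1 1)

/-- `b_Γ(z) = ½ ((P_Γ)₁₁ + (P_Γ)₁₂ - (P_Γ)₂₁ - (P_Γ)₂₂)`. -/
noncomputable def szBΓ (α : ℕ → ℂ) (p : ℕ) (Γ : ℂ) (z : ℂ) : ℂ :=
  (1 / 2) * (SzegoPGamma α p Γ z 0 0 + SzegoPGamma α p Γ z 0 1 -
    SzegoPGamma α p Γ z 1 0 - SzegoPGamma α p Γ z 1 1)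

/-- **Proposition 3.4(ii).** At no point of the bands do both boundary-value Jost
functions `j_{r,Γ}` and `ĵ_{r,Γ}` vanish. -/
theorem opuc_periodic_jost_not_both_vanish
    (p : ℕ) (hp : 0 < p) (hpeven : Even p)
    (α : ℕ → ℂ)
    (hα : ∀ n, ‖α n‖ < 1)
    (hper : ∀ n, α (n + p) = α n)
    (φ φs ψ ψs : ℕ → Polynomial ℂ)
    (hφ0 : φ 0 = 1)
    (hφrec : ∀ n, φ (n + 1) =
      C ((szRho α n : ℂ))⁻¹ * (X * φ n - C (starRingEnd ℂ (α n)) * φs n))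
    (hφs : ∀ n, ∀ z : ℂ, z ≠ 0 →
      aeval z (φs n) = z ^ n * starRingEnd ℂ (aeval ((starRingEnd ℂ z)⁻¹) (φ n)))
    (hψ0 : ψ 0 = 1)
    (hψrec : ∀ n, ψ (n + 1) =
      C ((szRho α n : ℂ))⁻¹ * (X * ψ n - C (starRingEnd ℂ (-α n)) * ψs n))
    (hψs : ∀ n, ∀ z : ℂ, z ≠ 0 →
      aeval z (ψs n) = z ^ n * starRingEnd ℂ (aeval ((starRingEnd ℂ z)⁻¹) (ψ n)))
    (r : ℕ) (hr : r < p)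
    (z : ℂ) (hz : ‖z‖ = 1)
    (hΔ : ∃ t : ℝ, t ∈ Set.Ioo (-2 : ℝ) 2 ∧ SzegoDisc α p z = (t : ℂ))
    (Γ : ℂ)
    (hΓ : Γ ^ 2 - SzegoDisc α p z * Γ + 1 = 0) :
    szAΓ α p Γ z * aeval z (φ r) + szBΓ α p Γ z * aeval z (ψ r) ≠ 0 ∨
      (1 - szAΓ α p Γ z) * aeval z (φ r) - szBΓ α p Γ z * aeval z (ψ r) ≠ 0 := by
  -- `z ≠ 0` and `(conj z)⁻¹ = z` on the unit circle.
  have hz0 : z ≠ 0 := by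
    intro h; rw [h] at hz; simp at hz
  have hcz : ((starRingEnd ℂ z)⁻¹ : ℂ) = z := by
    have : (starRingEnd ℂ z) * z = 1 := by
      rw [mul_comm, Complex.mul_conj]
      norm_cast
      rw [Complex.normSq_eq_norm_sq]
      simp only [hz]; norm_num
    exact inv_eq_of_mul_eq_one_right this
  -- φ_n has no zeros on the unit circle
  have key : ∀ n, aeval z (φ n) ≠ 0 := by
    intro n
    induction n with
    | zero => simp [hφ0]
    | succ n ih =>
      have hρ : (0:ℝ) < szRho α n := by
        apply Real.sqrt_pos.2
        nlinarith [hα n, norm_nonneg (α n)]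
      have hρC : ((szRho α n : ℂ))⁻¹ ≠ 0 := by
        apply inv_ne_zero
        exact_mod_cast hρ.ne'
      have hs : ‖aeval z (φs n)‖ = ‖aeval z (φ n)‖ := by
        rw [hφs n z hz0, hcz]
        rw [norm_mul, norm_pow, hz, one_pow, one_mul, RCLike.norm_conj]
      rw [hφrec n]
      simp only [_root_.map_mul, _root_.map_sub, aeval_C, aeval_X]
      intro h
      rcases mul_eq_zero.1 h with h' | h'
      · exact hρC h'
      · have heq : z * (aeval z) (φ n) = starRingEnd ℂ (α n) * (aeval z) (φs n) :=
          sub_eq_zero.1 h'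
        have h1 : ‖z * (aeval z) (φ n)‖ = ‖aeval z (φ n)‖ := by
          rw [norm_mul, hz, one_mul]
        have h2 : ‖starRingEnd ℂ (α n) * (aeval z) (φs n)‖ < ‖aeval z (φ n)‖ := by
          rw [norm_mul, RCLike.norm_conj, hs]
          have hpos : 0 < ‖aeval z (φ n)‖ := norm_pos_iff.2 ih
          calc ‖α n‖ * ‖aeval z (φ n)‖ < 1 * ‖aeval z (φ n)‖ := by
                exact mul_lt_mul_of_pos_right (hα n) hpos
            _ = ‖aeval z (φ n)‖ := one_mul _
        rw [← heq, h1] at h2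
        exact lt_irrefl _ h2
  -- if both vanished, their sum φ_r(z) would vanish
  by_contra hcon
  push_neg at hcon
  obtain ⟨h1, h2⟩ := hcon
  exact key r (by linear_combination h1 + h2)
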